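/- If A is symmetric positive definite and C(0) is positive definite, then the AGRF mean m(t) = (C(0)^{−1} + 2tA)^{−1}(C(0)^{−1} m(0) − t b) converges to −(1/2) A^{−1} b as t → ∞, which is the unique global minimizer of f(x) = xᵀAx + bᵀx + c. -/

import Mathlib

open Matrix

lemma posdef_comb {n : ℕ} {P Q : Matrix (Fin n) (Fin n) ℝ} (hP : P.PosDef) (hQ : Q.PosDef)
    {s : ℝ} (hs : 0 < s) : (s • P + (2:ℝ) • Q).PosDef := by
  have hPT : Pᵀ = P := by
    ext i j; simpa using congrFun (congrFun hP.1.eq i) j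
  have hQT : Qᵀ = Q := by
    ext i j; simpa using congrFun (congrFun hQ.1.eq i) j
  rw [Matrix.posDef_iff_dotProduct_mulVec]
  constructor
  · show (s • P + (2:ℝ) • Q)ᴴ = _
    rw [Matrix.conjTranspose_add, Matrix.conjTranspose_smul, Matrix.conjTranspose_smul]
    ext i j
    have hp := congrFun (congrFun hPT i) j
    have hq := congrFun (congrFun hQT i) j
    simp only [Matrix.transpose_apply] at hp hq
    simp [hp, hq]
  · intro x hx
    have h1 := (Matrix.posDef_iff_dotProduct_mulVec.mp hP).2 hx
    have h2 := (Matrix.posDef_iff_dotProduct_mulVec.mp hQ).2 hx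
    simp only [add_mulVec, smul_mulVec, dotProduct_add, dotProduct_smul, smul_eq_mul,
      RCLike.re_to_real] at *
    nlinarith

/-- If `A` is symmetric positive definite and `C(0)` positive definite, the AGRF mean
`m(t) = (C(0)⁻¹ + 2tA)⁻¹(C(0)⁻¹m(0) − tb)` converges to `−(1/2)A⁻¹b` as `t → ∞`, which
is the unique global minimizer of `f(x) = xᵀAx + bᵀx + c`. -/
theorem mean_limit_quadratic {n : ℕ} {A C0 : Matrix (Fin n) (Fin n) ℝ}
    (hA : A.PosDef) (hC0 : C0.PosDef) (b m0 : Fin n → ℝ) (c : ℝ) :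
    Filter.Tendsto
      (fun t : ℝ => (C0⁻¹ + (2 * t) • A)⁻¹.mulVec (C0⁻¹.mulVec m0 - t • b))
      Filter.atTop (nhds (-(1 / 2 : ℝ) • A⁻¹.mulVec b)) ∧
    ∀ x : Fin n → ℝ, x ≠ -(1 / 2 : ℝ) • A⁻¹.mulVec b →
      (-(1 / 2 : ℝ) • A⁻¹.mulVec b) ⬝ᵥ A.mulVec (-(1 / 2 : ℝ) • A⁻¹.mulVec b)
          + b ⬝ᵥ (-(1 / 2 : ℝ) • A⁻¹.mulVec b) + c
        < x ⬝ᵥ A.mulVec x + b ⬝ᵥ x + c := by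
  have hAdet : IsUnit A.det := hA.det_pos.ne'.isUnit
  constructor
  · -- limit part
    set v : Fin n → ℝ := C0⁻¹.mulVec m0 with hv
    set g : ℝ → (Fin n → ℝ) :=
      fun s => (s • C0⁻¹ + (2:ℝ) • A)⁻¹.mulVec (s • v - b) with hg
    have h2 : ((0:ℝ) • C0⁻¹ + (2:ℝ) • A) = (2:ℝ) • A := by simp
    have h2A : ((0:ℝ) • C0⁻¹ + (2:ℝ) • A).det ≠ 0 := by
      rw [h2, Matrix.det_smul]
      have := hA.det_pos
      positivity
    have hMcont : Continuous (fun s : ℝ => s • C0⁻¹ + (2:ℝ) • A) :=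
      (continuous_id.smul continuous_const).add continuous_const
    have hinvcomp : ContinuousAt (fun s : ℝ => (s • C0⁻¹ + (2:ℝ) • A)⁻¹) 0 :=
      ContinuousAt.comp
        (continuousAt_matrix_inv _ (NormedRing.inverse_continuousAt (Units.mk0 _ h2A)))
        hMcont.continuousAt
    have hwcont : Continuous (fun s : ℝ => s • v - b) :=
      (continuous_id.smul continuous_const).sub continuous_const
    have hgcont : ContinuousAt g 0 := by
      have hmv : Continuous (fun p : Matrix (Fin n) (Fin n) ℝ × (Fin n → ℝ) => p.1.mulVec p.2) :=
        continuous_fst.matrix_mulVec continuous_snd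
      exact hmv.continuousAt.comp (hinvcomp.prodMk hwcont.continuousAt)
    have hg0 : g 0 = -(1 / 2 : ℝ) • A⁻¹.mulVec b := by
      show ((0:ℝ) • C0⁻¹ + (2:ℝ) • A)⁻¹.mulVec ((0:ℝ) • v - b) = _
      rw [h2, Matrix.inv_smul A (2:ℝ) hAdet, invOf_eq_inv]
      rw [Matrix.smul_mulVec]
      ext i
      simp [Matrix.mulVec_neg, Pi.smul_apply]
      try ring
    have htends : Filter.Tendsto (fun t : ℝ => g t⁻¹) Filter.atTop (nhds (g 0)) :=
      hgcont.tendsto.comp tendsto_inv_atTop_zero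
    rw [hg0] at htends
    refine htends.congr' ?_
    filter_upwards [Filter.eventually_gt_atTop 0] with t ht
    have hti : (0:ℝ) < t⁻¹ := inv_pos.mpr ht
    have hN : (t⁻¹ • C0⁻¹ + (2:ℝ) • A).PosDef := posdef_comb hC0.inv hA hti
    have hNdet : IsUnit (t⁻¹ • C0⁻¹ + (2:ℝ) • A).det := hN.det_pos.ne'.isUnit
    have htne : t ≠ 0 := ht.ne'
    have key : C0⁻¹ + (2 * t) • A = t • (t⁻¹ • C0⁻¹ + (2:ℝ) • A) := by
      rw [smul_add, smul_smul, smul_smul, mul_inv_cancel₀ htne, one_smul, mul_comm]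
    have : Invertible t := invertibleOfNonzero htne
    show g t⁻¹ = (C0⁻¹ + (2 * t) • A)⁻¹.mulVec (v - t • b)
    rw [key, Matrix.inv_smul _ t hNdet, invOf_eq_inv, Matrix.smul_mulVec,
      ← Matrix.mulVec_smul]
    show (t⁻¹ • C0⁻¹ + (2:ℝ) • A)⁻¹.mulVec (t⁻¹ • v - b) = _
    rw [smul_sub, smul_smul, inv_mul_cancel₀ htne, one_smul]
  · -- minimizer part
    intro x hx
    set xs : Fin n → ℝ := -(1 / 2 : ℝ) • A⁻¹.mulVec b with hxs
    have hAxs : A.mulVec xs = -(1 / 2 : ℝ) • b := by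
      rw [hxs, Matrix.mulVec_smul, Matrix.mulVec_mulVec, Matrix.mul_nonsing_inv _ hAdet,
        Matrix.one_mulVec]
    set d : Fin n → ℝ := x - xs with hd
    have hdne : d ≠ 0 := sub_ne_zero.mpr hx
    have hpos : 0 < d ⬝ᵥ A.mulVec d := by
      have := (Matrix.posDef_iff_dotProduct_mulVec.mp hA).2 hdne
      simpa using this
    have hx' : x = xs + d := by rw [hd]; abel
    have hAT : Aᵀ = A := by
      ext i j
      have := congrFun (congrFun hA.1.eq i) j
      simpa using this
    have hsymm : ∀ u w : Fin n → ℝ, u ⬝ᵥ A.mulVec w = w ⬝ᵥ A.mulVec u := by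
      intro u w
      rw [Matrix.dotProduct_mulVec]
      nth_rewrite 1 [← hAT]
      rw [Matrix.vecMul_transpose, dotProduct_comm]
    have e1 : xs ⬝ᵥ A.mulVec d = -(1/2) * (d ⬝ᵥ b) := by
      rw [hsymm, hAxs, dotProduct_smul]
      simp
    have e2 : d ⬝ᵥ A.mulVec xs = -(1/2) * (d ⬝ᵥ b) := by
      rw [hAxs, dotProduct_smul]
      simp
    have e3 : b ⬝ᵥ d = d ⬝ᵥ b := dotProduct_comm _ _
    rw [hx']
    simp only [Matrix.mulVec_add, dotProduct_add, add_dotProduct]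
    linarith
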